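/- A normal weakly Lindelöf Hausdorff space with a G_δ-diagonal of rank 2 has cardinality at most 2^ℵ₀. -/

import Mathlib

open Cardinal Set

universe u

section Defs
variable (X : Type u) [TopologicalSpace X]

/-- An open cover of the whole space. -/
def IsOpenCover (𝒰 : Set (Set X)) : Prop := (∀ U ∈ 𝒰, IsOpen U) ∧ ⋃₀ 𝒰 = Set.univ

/-- The cellularity: supremum of cardinalities of pairwise disjoint families of nonempty
open sets, plus `ℵ₀`. -/
noncomputable def cellularity : Cardinal.{u} :=
  max ℵ₀ (⨆ 𝒰 : {𝒰 : Set (Set X) // (∀ U ∈ 𝒰, IsOpen U ∧ U.Nonempty) ∧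
    𝒰.PairwiseDisjoint id}, #𝒰.1)

/-- The weak Lindelöf degree. -/
noncomputable def wLdeg : Cardinal.{u} :=
  sInf {κ | ℵ₀ ≤ κ ∧ ∀ 𝒰 : Set (Set X), IsOpenCover X 𝒰 →
    ∃ 𝒱 ⊆ 𝒰, #𝒱 ≤ κ ∧ Dense (⋃₀ 𝒱)}

/-- The tightness. -/
noncomputable def tightness : Cardinal.{u} :=
  sInf {κ | ℵ₀ ≤ κ ∧ ∀ (A : Set X) (x : X), x ∈ closure A →
    ∃ B ⊆ A, #B ≤ κ ∧ x ∈ closure B}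

/-- The π-character. -/
noncomputable def piCharacter : Cardinal.{u} :=
  sInf {κ | ℵ₀ ≤ κ ∧ ∀ x : X, ∃ 𝒬 : Set (Set X), #𝒬 ≤ κ ∧
    (∀ P ∈ 𝒬, IsOpen P ∧ P.Nonempty) ∧
    ∀ U : Set X, IsOpen U → x ∈ U → ∃ P ∈ 𝒬, P ⊆ U}

/-- The pseudocharacter. -/
noncomputable def pseudoChar : Cardinal.{u} :=
  sInf {κ | ℵ₀ ≤ κ ∧ ∀ x : X, ∃ 𝒱 : Set (Set X), #𝒱 ≤ κ ∧
    (∀ V ∈ 𝒱, IsOpen V ∧ x ∈ V) ∧ ⋂₀ 𝒱 = {x}}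

/-- The closed pseudocharacter. -/
noncomputable def closedPseudoChar : Cardinal.{u} :=
  sInf {κ | ℵ₀ ≤ κ ∧ ∀ x : X, ∃ 𝒱 : Set (Set X), #𝒱 ≤ κ ∧
    (∀ V ∈ 𝒱, IsOpen V ∧ x ∈ V) ∧ (⋂ V ∈ 𝒱, closure V) = {x}}

/-- The density. -/
noncomputable def densityCard : Cardinal.{u} :=
  sInf {κ | ℵ₀ ≤ κ ∧ ∃ D : Set X, #D ≤ κ ∧ Dense D}

/-- The star of a set `A` with respect to a family `𝒰`. -/
def st (A : Set X) (𝒰 : Set (Set X)) : Set X := ⋃₀ {U | U ∈ 𝒰 ∧ (A ∩ U).Nonempty}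

/-- The θ-closure of a set. -/
def thetaClosure (A : Set X) : Set X :=
  {x | ∀ U : Set X, IsOpen U → x ∈ U → (closure U ∩ A).Nonempty}

/-- The θ-density. -/
noncomputable def thetaDensityCard : Cardinal.{u} :=
  sInf {κ | ℵ₀ ≤ κ ∧ ∃ D : Set X, #D ≤ κ ∧ thetaClosure X D = Set.univ}

/-- A discrete family of sets: each point has a neighborhood meeting at most one member. -/
def IsDiscreteFamily (𝒰 : Set (Set X)) : Prop :=
  ∀ x : X, ∃ V : Set X, IsOpen V ∧ x ∈ V ∧ {U | U ∈ 𝒰 ∧ (V ∩ U).Nonempty}.Subsingleton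

/-- Countable discrete cellularity. -/
def CDC : Prop :=
  ∀ 𝒰 : Set (Set X), (∀ U ∈ 𝒰, IsOpen U ∧ U.Nonempty) → IsDiscreteFamily X 𝒰 → 𝒰.Countable

/-- Star-cdc: every open cover has a cdc subspace whose star covers the space. -/
def StarCDC : Prop :=
  ∀ 𝒰 : Set (Set X), IsOpenCover X 𝒰 → ∃ Y : Set X, CDC ↥Y ∧ st X Y 𝒰 = Set.univ

/-- H-closed space: every open cover has a finite subfamily with dense union. -/
def IsHClosedSpace : Prop :=
  ∀ 𝒰 : Set (Set X), IsOpenCover X 𝒰 → ∃ 𝒱 ⊆ 𝒰, 𝒱.Finite ∧ Dense (⋃₀ 𝒱)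

/-- Countable cellularity (ccc). -/
def CCCSpace : Prop :=
  ∀ 𝒰 : Set (Set X), (∀ U ∈ 𝒰, IsOpen U ∧ U.Nonempty) → 𝒰.PairwiseDisjoint id → 𝒰.Countable

/-- Weakly Lindelöf space. -/
def WeaklyLindelof : Prop :=
  ∀ 𝒰 : Set (Set X), IsOpenCover X 𝒰 → ∃ 𝒱 ⊆ 𝒰, 𝒱.Countable ∧ Dense (⋃₀ 𝒱)

/-- Almost Lindelöf space. -/
def AlmostLindelof : Prop :=
  ∀ 𝒰 : Set (Set X), IsOpenCover X 𝒰 → ∃ 𝒱 ⊆ 𝒰, 𝒱.Countable ∧ (⋃ V ∈ 𝒱, closure V) = Set.univ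

/-- A π-base: a family of nonempty open sets such that every nonempty open set contains one. -/
def IsPiBase (ℬ : Set (Set X)) : Prop :=
  (∀ B ∈ ℬ, IsOpen B ∧ B.Nonempty) ∧
  ∀ U : Set X, IsOpen U → U.Nonempty → ∃ B ∈ ℬ, B ⊆ U

/-- Power homogeneous: some power of `X` is homogeneous. -/
def PowerHomogeneous : Prop :=
  ∃ ι : Type u, ∀ x y : ι → X, ∃ h : (ι → X) ≃ₜ (ι → X), h x = y

/-- A strong `G_δ`-diagonal of rank 2. -/
def HasStrongRank2Diagonal : Prop :=
  ∃ 𝒰 : ℕ → Set (Set X), (∀ n, IsOpenCover X (𝒰 n)) ∧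
    ∀ x : X, (⋂ n, closure (st X (st X {x} (𝒰 n)) (𝒰 n))) = {x}

/-- A `G_δ`-diagonal of rank 2. -/
def HasRank2Diagonal : Prop :=
  ∃ 𝒰 : ℕ → Set (Set X), (∀ n, IsOpenCover X (𝒰 n)) ∧
    ∀ x : X, (⋂ n, st X (st X {x} (𝒰 n)) (𝒰 n)) = {x}

/-- A `G_δ`-diagonal of rank 3. -/
def HasRank3Diagonal : Prop :=
  ∃ 𝒰 : ℕ → Set (Set X), (∀ n, IsOpenCover X (𝒰 n)) ∧
    ∀ x : X, (⋂ n, st X (st X (st X {x} (𝒰 n)) (𝒰 n)) (𝒰 n)) = {x}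

/-- Basically disconnected: the closure of every cozero set is open. -/
def BasicallyDisconnected : Prop :=
  ∀ f : C(X, ℝ), IsOpen (closure {x | f x ≠ 0})

end Defs


section ErdosRado
universe v
variable {α : Type v}

open Classical in
noncomputable def erWitness (f : α → α → ℕ) (x0 : α) (s : ℕ → α) (p : ℕ → ℕ) : α :=
  if h : ∃ z : α, (∀ k, f (s k) z = p k) ∧ z ∉ Set.range s then h.choose else x0

noncomputable def erStage (f : α → α → ℕ) (x0 : α) : (ℵ₁ : Cardinal.{v}).ord.ToType → Set α :=
  fun i =>
    insert x0 ((⋃ j : Set.Iio i, erStage f x0 j.1) ∪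
      (fun sp : (ℕ → α) × (ℕ → ℕ) => erWitness f x0 sp.1 sp.2) ''
        {sp | ∀ k, sp.1 k ∈ ⋃ j : Set.Iio i, erStage f x0 j.1})
  termination_by i => i
  decreasing_by all_goals exact j.2

lemma card_fun_nat (β : Type v) : #(ℕ → β) = #β ^ (ℵ₀ : Cardinal.{v}) := by
  rw [mk_arrow]
  simp

lemma erStage_card (f : α → α → ℕ) (x0 : α) (i) : #(erStage f x0 i) ≤ 𝔠 := by
  induction i using WellFoundedLT.induction with
  | _ i IH =>
  rw [erStage]
  set P : Set α := ⋃ j : Set.Iio i, erStage f x0 j.1 with hP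
  have hPc : #P ≤ 𝔠 := by
    refine (mk_iUnion_le _).trans ?_
    have h1 : #(Set.Iio i) ≤ 𝔠 :=
      (mk_set_le _).trans (by rw [mk_toType, card_ord]; exact aleph_one_le_continuum)
    have h2 : ⨆ j : Set.Iio i, #(erStage f x0 j.1) ≤ 𝔠 := ciSup_le' fun j => IH j.1 j.2
    calc #(Set.Iio i) * ⨆ j : Set.Iio i, #(erStage f x0 j.1) ≤ 𝔠 * 𝔠 := mul_le_mul' h1 h2
    _ = 𝔠 := continuum_mul_self
  have hWc : #((fun sp : (ℕ → α) × (ℕ → ℕ) => erWitness f x0 sp.1 sp.2) ''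
      {sp | ∀ k, sp.1 k ∈ P}) ≤ 𝔠 := by
    refine mk_image_le.trans ?_
    have hinj : Function.Injective
        (fun sp : {sp : (ℕ → α) × (ℕ → ℕ) // ∀ k, sp.1 k ∈ P} =>
          ((fun k => (⟨sp.1.1 k, sp.2 k⟩ : ↥P), sp.1.2) : (ℕ → ↥P) × (ℕ → ℕ))) := by
      rintro ⟨⟨s1, p1⟩, h1⟩ ⟨⟨s2, p2⟩, h2⟩ heq
      simp only [Prod.mk.injEq, funext_iff, Subtype.mk.injEq] at heq ⊢
      exact ⟨heq.1, heq.2⟩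
    refine (mk_le_of_injective hinj).trans ?_
    rw [mk_prod, card_fun_nat (↥P)]
    have : (#P ^ (ℵ₀ : Cardinal.{v})) ≤ 𝔠 := by
      calc #P ^ (ℵ₀ : Cardinal.{v}) ≤ 𝔠 ^ (ℵ₀ : Cardinal.{v}) := power_le_power_right hPc
      _ = 𝔠 := continuum_power_aleph0
    calc Cardinal.lift.{0} (#P ^ (ℵ₀:Cardinal.{v})) * Cardinal.lift.{v} #(ℕ → ℕ)
        = (#P ^ (ℵ₀:Cardinal.{v})) * ((ℵ₀:Cardinal.{v}) ^ (ℵ₀:Cardinal.{v})) := by simp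
      _ ≤ 𝔠 * 𝔠 := mul_le_mul' this (le_of_eq aleph0_power_aleph0)
      _ = 𝔠 := continuum_mul_self
  calc #(insert x0 ((P ∪ _) : Set α) : Set α) ≤ #((P ∪ _ : Set α)) + 1 := mk_insert_le
    _ ≤ (#P + #(_ '' _)) + 1 := by gcongr; exact mk_union_le _ _
    _ ≤ (𝔠 + 𝔠) + 1 := add_le_add (add_le_add hPc hWc) le_rfl
    _ = 𝔠 := by rw [continuum_add_self]; exact continuum_add_nat 1

noncomputable def erMM (f : α → α → ℕ) (x0 : α) : Set α :=
  ⋃ i, erStage f x0 i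

lemma erMM_card (f : α → α → ℕ) (x0 : α) : #(erMM f x0) ≤ 𝔠 := by
  refine (mk_iUnion_le _).trans ?_
  have h1 : #((ℵ₁ : Cardinal.{v}).ord.ToType) ≤ 𝔠 := by
    rw [mk_toType, card_ord]; exact aleph_one_le_continuum
  have h2 : ⨆ i, #(erStage f x0 i) ≤ 𝔠 := ciSup_le' fun i => erStage_card f x0 i
  calc _ ≤ 𝔠 * 𝔠 := mul_le_mul' h1 h2
    _ = 𝔠 := continuum_mul_self

lemma x0_mem_erStage (f : α → α → ℕ) (x0 : α) (i) : x0 ∈ erStage f x0 i := by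
  rw [erStage]; exact mem_insert _ _

lemma erStage_subset (f : α → α → ℕ) (x0 : α) {j i} (h : j < i) :
    erStage f x0 j ⊆ erStage f x0 i := by
  intro z hz
  rw [erStage]
  exact mem_insert_of_mem _ (Or.inl (mem_iUnion.2 ⟨⟨j, h⟩, hz⟩))

lemma x0_mem_erMM (f : α → α → ℕ) (x0 : α) : x0 ∈ erMM f x0 := by
  have : Nonempty ((ℵ₁ : Cardinal.{v}).ord.ToType) := by
    rw [Ordinal.nonempty_toType_iff]
    exact (Cardinal.isSuccLimit_ord (aleph0_le_aleph 1)).bot_lt.ne'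
  exact mem_iUnion.2 ⟨Classical.arbitrary _, x0_mem_erStage f x0 _⟩

lemma erBounded (g : ℕ → (ℵ₁ : Cardinal.{v}).ord.ToType) :
    ∃ i, ∀ k, g k < i := by
  set e := (Ordinal.ToType.mk (o := (ℵ₁ : Cardinal.{v}).ord)) with he
  set o : Ordinal.{v} := ⨆ k, (e.symm (g k)).1 with ho
  have h1 : o < (ℵ₁ : Cardinal.{v}).ord := by
    apply Cardinal.iSup_lt_ord_lift_of_isRegular isRegular_aleph_one
    · simpa using aleph0_lt_aleph_one
    · exact fun k => (e.symm (g k)).2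
  have h2 : Order.succ o < (ℵ₁ : Cardinal.{v}).ord :=
    (Cardinal.isSuccLimit_ord (aleph0_le_aleph 1)).succ_lt h1
  refine ⟨e ⟨Order.succ o, h2⟩, fun k => ?_⟩
  have hle : (e.symm (g k)).1 ≤ o := ho ▸ Ordinal.le_iSup (fun k => (e.symm (g k)).1) k
  have hco : ((e.symm (g k) : Set.Iio (ℵ₁ : Cardinal.{v}).ord) : Ordinal.{v}) < ((⟨Order.succ o, h2⟩ : Set.Iio (ℵ₁ : Cardinal.{v}).ord) : Ordinal.{v}) :=
    hle.trans_lt (Order.lt_succ o)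
  have : e.symm (g k) < ⟨Order.succ o, h2⟩ := Subtype.coe_lt_coe.1 hco
  have := e.lt_iff_lt.2 this
  rwa [OrderIso.apply_symm_apply] at this

lemma erMM_closed (f : α → α → ℕ) (x0 : α) (s : ℕ → α) (hs : ∀ k, s k ∈ erMM f x0)
    (p : ℕ → ℕ) : erWitness f x0 s p ∈ erMM f x0 := by
  have hg : ∀ k, ∃ i, s k ∈ erStage f x0 i := fun k => mem_iUnion.1 (hs k)
  choose g hgmem using hg
  obtain ⟨i, hi⟩ := erBounded g
  have hsub : ∀ k, s k ∈ ⋃ j : Set.Iio i, erStage f x0 j.1 := fun k =>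
    mem_iUnion.2 ⟨⟨g k, hi k⟩, hgmem k⟩
  have : erWitness f x0 s p ∈ erStage f x0 i := by
    rw [erStage]
    exact mem_insert_of_mem _ (Or.inr ⟨(s, p), hsub, rfl⟩)
  exact mem_iUnion.2 ⟨i, this⟩

open Classical in
noncomputable def erSeq (f : α → α → ℕ) (x0 a : α) : Ordinal.{v} → α :=
  fun o =>
    if h : ∃ e : ℕ → α, Set.range e = {z | ∃ o', ∃ _ : o' < o, erSeq f x0 a o' = z}
    then erWitness f x0 h.choose (fun k => f (h.choose k) a)
    else x0
  termination_by o => o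
  decreasing_by all_goals assumption

lemma erPrev_countable (f : α → α → ℕ) (x0 a : α) {o : Ordinal.{v}}
    (ho : o < (ℵ₁ : Cardinal.{v}).ord) :
    {z | ∃ o', ∃ _ : o' < o, erSeq f x0 a o' = z}.Countable := by
  have h1 : {z | ∃ o', ∃ _ : o' < o, erSeq f x0 a o' = z} =
      (fun o' => erSeq f x0 a o') '' (Set.Iio o) := by
    ext z; simp [Set.mem_image, eq_comm]
  rw [h1]
  refine Set.Countable.image ?_ _
  rw [← Set.countable_coe_iff, Set.countable_coe_iff, countable_iff_lt_aleph_one,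
    Ordinal.mk_Iio_ordinal]
  have h2 : o.card < (ℵ₁ : Cardinal.{v}) := Cardinal.lt_ord.1 ho
  have := Cardinal.lift_lt.{v, v+1}.2 h2
  rwa [lift_aleph, Ordinal.lift_one] at this

lemma erSeq_spec (f : α → α → ℕ) (x0 a : α) (ha : a ∉ erMM f x0) :
    ∀ o : Ordinal.{v}, o < (ℵ₁ : Cardinal.{v}).ord →
      erSeq f x0 a o ∈ erMM f x0 ∧
      ∀ o' < o, f (erSeq f x0 a o') (erSeq f x0 a o) = f (erSeq f x0 a o') a ∧
        erSeq f x0 a o ≠ erSeq f x0 a o' := by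
  intro o
  induction o using Ordinal.induction with
  | _ o IH =>
  intro ho
  by_cases h : ∃ e : ℕ → α, Set.range e = {z | ∃ o', ∃ _ : o' < o, erSeq f x0 a o' = z}
  · have heq : erSeq f x0 a o = erWitness f x0 h.choose (fun k => f (h.choose k) a) := by
      rw [erSeq, dif_pos h]
    have hrange := h.choose_spec
    set e := h.choose with he
    have hprevMM : ∀ z ∈ Set.range e, z ∈ erMM f x0 := by
      intro z hz
      rw [hrange] at hz
      obtain ⟨o', ho', hz⟩ := hz
      exact hz ▸ (IH o' ho' (ho'.trans ho)).1
    have hmm : erSeq f x0 a o ∈ erMM f x0 := by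
      rw [heq]
      exact erMM_closed f x0 e (fun k => hprevMM _ (Set.mem_range_self k)) _
    -- the witness property
    have hex : ∃ z : α, (∀ k, f (e k) z = (fun k => f (e k) a) k) ∧ z ∉ Set.range e :=
      ⟨a, fun k => rfl, fun hmem => ha (hprevMM a hmem)⟩
    have hspec : (∀ k, f (e k) (erSeq f x0 a o) = f (e k) a) ∧ erSeq f x0 a o ∉ Set.range e := by
      rw [heq, erWitness, dif_pos hex]
      exact hex.choose_spec
    refine ⟨hmm, fun o' ho' => ?_⟩
    have hmemprev : erSeq f x0 a o' ∈ Set.range e := by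
      rw [hrange]; exact ⟨o', ho', rfl⟩
    obtain ⟨k, hk⟩ := hmemprev
    constructor
    · rw [← hk]; exact hspec.1 k
    · intro hcontra
      exact hspec.2 ⟨k, hk.trans hcontra.symm⟩
  · have heq : erSeq f x0 a o = x0 := by rw [erSeq, dif_neg h]
    have hnoprev : ∀ o', ¬ o' < o := by
      intro o' ho'
      have hne : {z | ∃ o'', ∃ _ : o'' < o, erSeq f x0 a o'' = z}.Nonempty :=
        ⟨erSeq f x0 a o', o', ho', rfl⟩
      obtain ⟨e, hee⟩ := (erPrev_countable f x0 a ho).exists_eq_range hne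
      exact h ⟨e, hee.symm⟩
    refine ⟨?_, fun o' ho' => absurd ho' (hnoprev o')⟩
    rw [heq]
    exact x0_mem_erMM f x0

theorem erdos_rado_nat (f : α → α → ℕ) (hcard : 𝔠 < #α) :
    ∃ (n : ℕ) (H : Set α), ¬ H.Countable ∧
      ∀ x ∈ H, ∀ y ∈ H, x ≠ y → f x y = n ∨ f y x = n := by
  have hne : Nonempty α := by
    rw [← Cardinal.mk_ne_zero_iff]
    exact fun h0 => absurd (h0 ▸ hcard) (by simp [continuum_pos.not_gt])
  obtain ⟨x0⟩ := hne
  have hMM : #(erMM f x0) ≤ 𝔠 := erMM_card f x0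
  have ha : ∃ a, a ∉ erMM f x0 := by
    by_contra hc
    push_neg at hc
    have : erMM f x0 = Set.univ := Set.eq_univ_of_forall hc
    rw [this, Cardinal.mk_univ] at hMM
    exact absurd (hMM.trans_lt hcard) (lt_irrefl _)
  obtain ⟨a, ha⟩ := ha
  set S : Ordinal.{v} → α := erSeq f x0 a with hS
  have hspec := erSeq_spec f x0 a ha
  set F : ℕ → Set Ordinal.{v} := fun n => {o | o < (ℵ₁ : Cardinal.{v}).ord ∧ f (S o) a = n}
    with hF
  have hFn : ∃ n, ¬ (F n).Countable := by
    by_contra hc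
    push_neg at hc
    have hcover : Set.Iio ((ℵ₁ : Cardinal.{v}).ord) ⊆ ⋃ n, F n := by
      intro o ho
      exact Set.mem_iUnion.2 ⟨f (S o) a, ho, rfl⟩
    have hcnt : (Set.Iio ((ℵ₁ : Cardinal.{v}).ord)).Countable :=
      (Set.countable_iUnion hc).mono hcover
    rw [countable_iff_lt_aleph_one, Ordinal.mk_Iio_ordinal, card_ord] at hcnt
    rw [lift_aleph, Ordinal.lift_one] at hcnt
    exact absurd hcnt (lt_irrefl _)
  obtain ⟨n, hFn⟩ := hFn
  refine ⟨n, S '' (F n), ?_, ?_⟩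
  · intro hcnt
    refine hFn (Set.countable_of_injective_of_countable_image ?_ hcnt)
    intro o₁ h₁ o₂ h₂ heq
    by_contra hne12
    rcases lt_or_gt_of_ne hne12 with hlt | hlt
    · exact ((hspec o₂ h₂.1).2 o₁ hlt).2 heq.symm
    · exact ((hspec o₁ h₁.1).2 o₂ hlt).2 heq
  · rintro x ⟨o₁, h₁, rfl⟩ y ⟨o₂, h₂, rfl⟩ hxy
    rcases lt_or_gt_of_ne (fun h : o₁ = o₂ => hxy (by rw [h])) with hlt | hlt
    · left
      have h3 := ((hspec o₂ h₂.1).2 o₁ hlt).1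
      exact h3.trans h₁.2
    · right
      have h3 := ((hspec o₁ h₁.1).2 o₂ hlt).1
      exact h3.trans h₂.2

end ErdosRado

section Topology
universe v
variable (X : Type v) [TopologicalSpace X]

lemma st_isOpen {𝒰 : Set (Set X)} (h : ∀ U ∈ 𝒰, IsOpen U) (A : Set X) :
    IsOpen (st X A 𝒰) :=
  isOpen_sUnion fun U hU => h U hU.1

lemma subset_st_of_mem {𝒰 : Set (Set X)} {U : Set X} {y : X} (hU : U ∈ 𝒰) (hy : y ∈ U) :
    U ⊆ st X {y} 𝒰 :=
  Set.subset_sUnion_of_mem ⟨hU, ⟨y, rfl, hy⟩⟩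

lemma mem_st_self {𝒰 : Set (Set X)} (hcov : IsOpenCover X 𝒰) (x : X) :
    x ∈ st X {x} 𝒰 := by
  have : x ∈ ⋃₀ 𝒰 := by rw [hcov.2]; trivial
  obtain ⟨U, hU, hxU⟩ := this
  exact subset_st_of_mem X hU hxU hxU

/-- In a weakly Lindelöf space, every discrete family of nonempty open sets is countable. -/
lemma weaklyLindelof_cdc (hwL : WeaklyLindelof X) (𝒱 : Set (Set X))
    (hV : ∀ U ∈ 𝒱, IsOpen U ∧ U.Nonempty) (hdisc : IsDiscreteFamily X 𝒱) :
    𝒱.Countable := by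
  set 𝒲 : Set (Set X) := {W | IsOpen W ∧ {U | U ∈ 𝒱 ∧ (W ∩ U).Nonempty}.Subsingleton} with h𝒲
  have hcov : IsOpenCover X 𝒲 := by
    refine ⟨fun W hW => hW.1, ?_⟩
    apply Set.eq_univ_of_forall
    intro x
    obtain ⟨V, hVopen, hxV, hVsub⟩ := hdisc x
    exact ⟨V, ⟨hVopen, hVsub⟩, hxV⟩
  obtain ⟨𝒱₀, h𝒱₀sub, h𝒱₀cnt, h𝒱₀dense⟩ := hwL 𝒲 hcov
  have hpick : ∀ U ∈ 𝒱, ∃ W ∈ 𝒱₀, (W ∩ U).Nonempty := by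
    intro U hU
    obtain ⟨z, hz1, hz2⟩ := h𝒱₀dense.inter_open_nonempty U (hV U hU).1 (hV U hU).2
    obtain ⟨W, hW, hzW⟩ := hz2
    exact ⟨W, hW, ⟨z, hzW, hz1⟩⟩
  choose g hg1 hg2 using hpick
  have : ∀ (U₁ : ↥𝒱) (U₂ : ↥𝒱),
      g U₁.1 U₁.2 = g U₂.1 U₂.2 → U₁ = U₂ := by
    rintro ⟨U₁, hU₁⟩ ⟨U₂, hU₂⟩ heq
    have hWmem : g U₁ hU₁ ∈ 𝒲 := h𝒱₀sub (hg1 U₁ hU₁)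
    have h1 : U₁ ∈ {U | U ∈ 𝒱 ∧ (g U₁ hU₁ ∩ U).Nonempty} := ⟨hU₁, hg2 U₁ hU₁⟩
    have h2 : U₂ ∈ {U | U ∈ 𝒱 ∧ (g U₁ hU₁ ∩ U).Nonempty} := by
      refine ⟨hU₂, ?_⟩
      rw [heq]
      exact hg2 U₂ hU₂
    exact Subtype.ext (hWmem.2 h1 h2)
  rw [← Set.countable_coe_iff]
  have h𝒱₀cnt' : Countable ↥𝒱₀ := Set.countable_coe_iff.2 h𝒱₀cnt
  exact Function.Injective.countable
    (f := fun U : ↥𝒱 => (⟨g U.1 U.2, hg1 U.1 U.2⟩ : ↥𝒱₀))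
    (fun U₁ U₂ h => this U₁ U₂ (congrArg Subtype.val h))

end Topology

theorem stmt10 (X : Type u) [TopologicalSpace X] [T2Space X] [NormalSpace X]
    (hwL : WeaklyLindelof X) (hd : HasRank2Diagonal X) :
    #X ≤ 2 ^ ℵ₀ := by
  classical
  rw [two_power_aleph0]
  by_contra hcard
  rw [not_le] at hcard
  obtain ⟨𝒰, hcov, hdiag⟩ := hd
  have hsep : ∀ x y : X, x ≠ y → ∃ n, st X {x} (𝒰 n) ∩ st X {y} (𝒰 n) = ∅ := by
    intro x y hxy
    have hy : y ∉ ⋂ n, st X (st X {x} (𝒰 n)) (𝒰 n) := by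
      rw [hdiag x]
      exact fun h => hxy (Set.mem_singleton_iff.1 h).symm
    rw [Set.mem_iInter] at hy
    push_neg at hy
    obtain ⟨n, hn⟩ := hy
    refine ⟨n, Set.eq_empty_iff_forall_notMem.2 ?_⟩
    rintro z ⟨hz1, hz2⟩
    obtain ⟨U, ⟨hU, hyU⟩, hzU⟩ := hz2
    apply hn
    refine ⟨U, ⟨hU, ⟨z, hz1, hzU⟩⟩, ?_⟩
    obtain ⟨w, hw1, hw2⟩ := hyU
    rw [Set.mem_singleton_iff] at hw1
    rwa [hw1] at hw2
  set f : X → X → ℕ := fun x y =>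
    if h : ∃ n, st X {x} (𝒰 n) ∩ st X {y} (𝒰 n) = ∅ then h.choose else 0 with hfdef
  have hf : ∀ x y, x ≠ y → st X {x} (𝒰 (f x y)) ∩ st X {y} (𝒰 (f x y)) = ∅ := by
    intro x y hxy
    have h := hsep x y hxy
    simp only [hfdef, dif_pos h]
    exact h.choose_spec
  obtain ⟨n, H, hHunc, hHom⟩ := erdos_rado_nat f hcard
  have hpair : ∀ x ∈ H, ∀ y ∈ H, x ≠ y → st X {x} (𝒰 n) ∩ st X {y} (𝒰 n) = ∅ := by
    intro x hx y hy hxy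
    rcases hHom x hx y hy hxy with h | h
    · have := hf x y hxy; rwa [h] at this
    · have := hf y x hxy.symm; rw [h] at this; rwa [Set.inter_comm] at this
  set V : X → Set X := fun h => st X {h} (𝒰 n) with hVdef
  have hVopen : ∀ h, IsOpen (V h) := fun h => st_isOpen X (hcov n).1 _
  have hVmem : ∀ h, h ∈ V h := fun h => mem_st_self X (hcov n) h
  have hHclosed : IsClosed H := by
    rw [← isOpen_compl_iff, isOpen_iff_forall_mem_open]
    intro y hy
    have hyuniv : y ∈ ⋃₀ 𝒰 n := by rw [(hcov n).2]; trivial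
    obtain ⟨U, hU, hyU⟩ := hyuniv
    have hsub : (U ∩ H).Subsingleton := by
      rintro h₁ ⟨hU₁, hH₁⟩ h₂ ⟨hU₂, hH₂⟩
      by_contra hne
      have hemp := hpair h₁ hH₁ h₂ hH₂ hne
      have hs1 := subset_st_of_mem X hU hU₁
      have hs2 := subset_st_of_mem X hU hU₂
      exact Set.eq_empty_iff_forall_notMem.1 hemp y ⟨hs1 hyU, hs2 hyU⟩
    by_cases hUH : (U ∩ H) = ∅
    · refine ⟨U, fun u hu huH => ?_, (hcov n).1 U hU, hyU⟩
      exact Set.eq_empty_iff_forall_notMem.1 hUH u ⟨hu, huH⟩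
    · obtain ⟨h, hh⟩ := Set.nonempty_iff_ne_empty.2 hUH
      have hhy : y ≠ h := fun he => hy (he ▸ hh.2)
      obtain ⟨Vy, Vh, hVyopen, hVhopen, hyVy, hhVh, hVdisj⟩ := t2_separation hhy
      refine ⟨U ∩ Vy, ?_, ((hcov n).1 U hU).inter hVyopen, hyU, hyVy⟩
      rintro u ⟨huU, huVy⟩ huH
      have hu_eq : u = h := hsub ⟨huU, huH⟩ hh
      rw [hu_eq] at huVy
      exact Set.disjoint_left.1 hVdisj huVy hhVh
  set G : Set X := ⋃ h ∈ H, V h with hGdef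
  have hHG : H ⊆ G := fun h hh => Set.mem_biUnion hh (hVmem h)
  have hGopen : IsOpen G := isOpen_biUnion fun h _ => hVopen h
  have hdisjcl : Disjoint H Gᶜ := Set.disjoint_left.2 fun h hh hc => hc (hHG hh)
  obtain ⟨O₁, O₂, hO₁, hO₂, hHO₁, hGcO₂, hO₁O₂⟩ :=
    NormalSpace.normal H Gᶜ hHclosed hGopen.isClosed_compl hdisjcl
  set 𝒱 : Set (Set X) := (fun h => V h ∩ O₁) '' H with h𝒱def
  have h𝒱 : ∀ A ∈ 𝒱, IsOpen A ∧ A.Nonempty := by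
    rintro A ⟨h, hh, rfl⟩
    exact ⟨(hVopen h).inter hO₁, ⟨h, hVmem h, hHO₁ hh⟩⟩
  have hdisc : IsDiscreteFamily X 𝒱 := by
    intro x
    by_cases hx : x ∈ O₂
    · refine ⟨O₂, hO₂, hx, ?_⟩
      rintro A ⟨⟨h, hh, rfl⟩, ⟨z, hz1, hz2, hz3⟩⟩ B hB
      exact absurd (Set.disjoint_left.1 hO₁O₂ hz3 hz1) (fun hq => hq)
    · have hxG : x ∈ G := by
        by_contra hxG
        exact hx (hGcO₂ hxG)
      obtain ⟨h₀, hh₀, hxV⟩ := Set.mem_iUnion₂.1 hxG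
      have key : ∀ A, A ∈ 𝒱 ∧ (V h₀ ∩ A).Nonempty → A = V h₀ ∩ O₁ := by
        rintro A ⟨⟨h, hh, rfl⟩, ⟨z, hz1, hz2, hz3⟩⟩
        by_cases hne : h = h₀
        · rw [hne]
        · exact absurd (Set.eq_empty_iff_forall_notMem.1
            (hpair h₀ hh₀ h hh (fun he => hne he.symm)) z ⟨hz1, hz2⟩) (fun hq => hq)
      exact ⟨V h₀, hVopen h₀, hxV, fun A hA B hB => (key A hA).trans (key B hB).symm⟩
  have hcnt : 𝒱.Countable := weaklyLindelof_cdc X hwL 𝒱 h𝒱 hdisc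
  apply hHunc
  refine Set.countable_of_injective_of_countable_image ?_ (h𝒱def ▸ hcnt)
  rintro h₁ hh₁ h₂ hh₂ heq
  by_contra hne
  have hemp := hpair h₁ hh₁ h₂ hh₂ hne
  have hnonempty : (V h₁ ∩ O₁).Nonempty := ⟨h₁, hVmem h₁, hHO₁ hh₁⟩
  obtain ⟨z, hz1, hz2⟩ := hnonempty
  have heq' : V h₁ ∩ O₁ = V h₂ ∩ O₁ := heq
  have hz3 : z ∈ V h₂ ∩ O₁ := by rw [← heq']; exact ⟨hz1, hz2⟩
  exact Set.eq_empty_iff_forall_notMem.1 hemp z ⟨hz1, hz3.1⟩
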